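/- Given an STS instance consisting of a graph on vertices 1,…,m, a target permutation π of tokens 1,…,m, and a sequence of swaps (a_1,b_1),…,(a_n,b_n) where each (a_i,b_i) is an edge of the graph, construct a Star STS instance as follows: the star has a center vertex holding token 0 and leaves {1,…,m} ∪ {s_i^in, s_i^out : 1≤i≤n}, each leaf initially holding a token of its own label; the target permutation keeps token 0 at the center, sends token i (1≤i≤m) to leaf π(i), and exchanges tokens s_i^in and s_i^out for each i; the swap sequence is the concatenation, over i=1,…,n in order, of the six swaps on edges (0,s_i^in),(0,a_i),(0,b_i),(0,a_i),(0,s_i^out),(0,s_i^in). Then the STS instance is a YES instance if and only if the constructed Star STS instance is a YES instance. -/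

import Mathlib

/-!
STATEMENT 1: The reduction from Subsequence Token Swapping Reachability (STS) on a
graph on vertices `1,…,m` to Star STS.

STS: graph `G` on `Fin m`, vertex `i` initially holds token `i`; target permutation
`π`; swaps are a list of edges; YES iff some subsequence of the swaps realizes `π`
(token `i` ends on vertex `π i`).

Star STS (with leaf set `L`): star with center (represented by `none`) and leaves
(`some l` for `l : L`); token `o : Option L` starts at vertex `o`; a swap `l : L`
exchanges the tokens at the center and at leaf `l`; YES iff some subsequence of the
swap list realizes the target permutation.

Construction: leaves are `{1,…,m} ∪ {sᵢⁱⁿ, sᵢᵒᵘᵗ : 1 ≤ i ≤ n}`, i.e.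
`L = Fin m ⊕ Fin n ⊕ Fin n`; the target permutation keeps token `0` at the center,
sends token `i` to leaf `π i` and exchanges `sᵢⁱⁿ` with `sᵢᵒᵘᵗ`; the swap sequence is
the concatenation over `i` of the six swaps `sᵢⁱⁿ, aᵢ, bᵢ, aᵢ, sᵢᵒᵘᵗ, sᵢⁱⁿ`.
-/

namespace Stmt1

/-- swap the values `e.1`, `e.2`. -/
def swapV {V : Type*} [DecidableEq V] (e : V × V) (v : V) : V :=
  if v = e.1 then e.2 else if v = e.2 then e.1 else v

/-- Apply a sequence of swaps to a token placement (token ↦ vertex). -/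
def applySwaps {T V : Type*} [DecidableEq V] (σ : List (V × V)) (f : T → V) : T → V :=
  σ.foldl (fun g e => fun t => swapV e (g t)) f

/-- Apply a sequence of star swaps (each given by a leaf) to a placement on the star
with center `none` and leaves `some l`. -/
def starApply {L : Type*} [DecidableEq L] (σ : List L) (f : Option L → Option L) :
    Option L → Option L :=
  σ.foldl (fun g l => fun t => swapV ((none : Option L), some l) (g t)) f

/-- The Star STS instance with target permutation `π` and allowed swap sequence `σ`
is a YES instance. -/
def StarSTSYes {L : Type*} [DecidableEq L] (π : Equiv.Perm (Option L)) (σ : List L) : Prop :=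
  ∃ σ' : List L, σ'.Sublist σ ∧ starApply σ' id = ⇑π

/-- The leaf type of the constructed star: leaves `1,…,m`, then the `sᵢⁱⁿ`, then the
`sᵢᵒᵘᵗ`. -/
abbrev L (m n : ℕ) := Fin m ⊕ Fin n ⊕ Fin n

/-- Target permutation of the constructed Star STS instance: the center token stays,
token `i` goes to leaf `π i`, and `sᵢⁱⁿ`, `sᵢᵒᵘᵗ` are exchanged. -/
def starTarget {m n : ℕ} (π : Equiv.Perm (Fin m)) : Equiv.Perm (Option (L m n)) :=
  Equiv.optionCongr (Equiv.sumCongr π (Equiv.sumComm (Fin n) (Fin n)))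

/-- The swap sequence of the constructed Star STS instance. -/
def starSeq {m n : ℕ} (sw : Fin n → Fin m × Fin m) : List (L m n) :=
  (List.ofFn fun i : Fin n =>
    ([Sum.inr (Sum.inl i), Sum.inl (sw i).1, Sum.inl (sw i).2, Sum.inl (sw i).1,
      Sum.inr (Sum.inr i), Sum.inr (Sum.inl i)] : List (L m n))).flatten


section Aux
variable {V : Type*} [DecidableEq V]

@[simp] lemma swV_fst (x y : V) : swapV (x, y) x = y := by simp [swapV]
lemma swV_snd {x y : V} (h : y ≠ x) : swapV (x, y) y = x := by simp [swapV, h]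
lemma swV_other {x y v : V} (h1 : v ≠ x) (h2 : v ≠ y) : swapV (x, y) v = v := by
  simp [swapV, h1, h2]

def chain : List V → Option V → Option V
  | [], v => v
  | l :: σ, v => chain σ (swapV (none, some l) v)

lemma starApply_eq_chain (σ : List V) (f : Option V → Option V) (t : Option V) :
    starApply σ f t = chain σ (f t) := by
  induction σ generalizing f with
  | nil => rfl
  | cons l σ ih => exact ih _

lemma chain_append (σ₁ σ₂ : List V) (v : Option V) :
    chain (σ₁ ++ σ₂) v = chain σ₂ (chain σ₁ v) := by
  induction σ₁ generalizing v with
  | nil => rfl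
  | cons l σ ih => exact ih _

lemma chain_notMem (σ : List V) (l : V) (h : l ∉ σ) : chain σ (some l) = some l := by
  induction σ with
  | nil => rfl
  | cons x σ ih =>
    have hx : l ≠ x := fun e => h (e ▸ (List.mem_cons_self : x ∈ x :: σ))
    have : swapV ((none : Option V), some x) (some l) = some l := by
      simp [swapV, hx]
    rw [chain, this]
    exact ih (fun hm => h (List.mem_cons_of_mem _ hm))

lemma chain_notMem_rev (σ : List V) (l : V) (h : l ∉ σ) (v : Option V)
    (hv : chain σ v = some l) : v = some l := by
  induction σ generalizing v with
  | nil => exact hv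
  | cons x σ ih =>
    have hx : l ≠ x := fun e => h (e ▸ (List.mem_cons_self : x ∈ x :: σ))
    have h2 := ih (fun hm => h (List.mem_cons_of_mem _ hm)) _ hv
    rcases v with _ | y
    · simp [swapV] at h2; exact absurd h2.symm hx
    · by_cases hy : y = x
      · subst hy; simp [swapV] at h2
      · simpa [swapV, hy] using h2

def chainP : List (V × V) → V → V
  | [], v => v
  | e :: σ, v => chainP σ (swapV e v)

lemma applySwaps_eq_chainP {T : Type*} (σ : List (V × V)) (f : T → V) (t : T) :
    applySwaps σ f t = chainP σ (f t) := by
  induction σ generalizing f with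
  | nil => rfl
  | cons e σ ih => exact ih _

end Aux

section Blocks
variable {m n : ℕ}

def sinL (i : Fin n) : L m n := Sum.inr (Sum.inl i)
def soutL (i : Fin n) : L m n := Sum.inr (Sum.inr i)
def blockL (sw : Fin n → Fin m × Fin m) (i : Fin n) : List (L m n) :=
  [sinL i, Sum.inl (sw i).1, Sum.inl (sw i).2, Sum.inl (sw i).1, soutL i, sinL i]

lemma swapV_inl (e : Fin m × Fin m) (t : Fin m) :
    swapV (some (Sum.inl e.1), some (Sum.inl e.2)) (some (Sum.inl t) : Option (L m n)) =
      some (Sum.inl (swapV e t)) := by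
  by_cases h1 : t = e.1
  · subst h1; simp [swapV]
  · by_cases h2 : t = e.2
    · subst h2; simp [swapV, h1]
    · rw [swV_other (by simp [h1]) (by simp [h2]), swV_other h1 h2]

lemma chain_short (i : Fin n) (v : Option (L m n)) :
    chain [sinL i, soutL i, sinL i] v = swapV (some (sinL i), some (soutL i)) v := by
  rcases v with _ | (x | (j | j)) <;>
    simp only [chain, swapV, sinL, soutL] <;> split_ifs <;> simp_all

lemma chain_med (i : Fin n) (a : Fin m) (v : Option (L m n)) :
    chain [sinL i, Sum.inl a, Sum.inl a, soutL i, sinL i] v =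
      swapV (some (sinL i), some (soutL i)) v := by
  rcases v with _ | (x | (j | j))
  · simp [chain, sinL, soutL, swV_fst, swV_snd, swV_other]
  · by_cases hxa : x = a
    · subst hxa; simp [chain, sinL, soutL, swV_fst, swV_snd, swV_other]
    · simp [chain, sinL, soutL, swV_fst, swV_snd, swV_other, hxa]
  · by_cases hji : j = i
    · subst hji; simp [chain, sinL, soutL, swV_fst, swV_snd, swV_other]
    · simp [chain, sinL, soutL, swV_fst, swV_snd, swV_other, hji]
  · by_cases hji : j = i
    · subst hji; simp [chain, sinL, soutL, swV_fst, swV_snd, swV_other]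
    · simp [chain, sinL, soutL, swV_fst, swV_snd, swV_other, hji]

lemma chain_full (i : Fin n) (a b : Fin m) (hab : a ≠ b) (v : Option (L m n)) :
    chain [sinL i, Sum.inl a, Sum.inl b, Sum.inl a, soutL i, sinL i] v =
      swapV (some (sinL i), some (soutL i))
        (swapV (some (Sum.inl a), some (Sum.inl b)) v) := by
  rcases v with _ | (x | (j | j))
  · simp [chain, sinL, soutL, swV_fst, swV_snd, swV_other, hab, Ne.symm hab]
  · by_cases hxa : x = a
    · subst hxa
      simp [chain, sinL, soutL, swV_fst, swV_snd, swV_other, hab, Ne.symm hab]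
    · by_cases hxb : x = b
      · subst hxb
        simp [chain, sinL, soutL, swV_fst, swV_snd, swV_other, hab, Ne.symm hab]
      · simp [chain, sinL, soutL, swV_fst, swV_snd, swV_other, hxa, hxb, hab, Ne.symm hab]
  · by_cases hji : j = i
    · subst hji; simp [chain, sinL, soutL, swV_fst, swV_snd, swV_other, hab, Ne.symm hab]
    · simp [chain, sinL, soutL, swV_fst, swV_snd, swV_other, hji, hab, Ne.symm hab]
  · by_cases hji : j = i
    · subst hji; simp [chain, sinL, soutL, swV_fst, swV_snd, swV_other, hab, Ne.symm hab]
    · simp [chain, sinL, soutL, swV_fst, swV_snd, swV_other, hji, hab, Ne.symm hab]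

set_option maxHeartbeats 2000000 in
lemma block_back (sw : Fin n → Fin m × Fin m) (i : Fin n)
    (hab : (sw i).1 ≠ (sw i).2) (τ : List (L m n)) (hτ : τ.Sublist (blockL sw i))
    (h1 : chain τ (some (sinL i)) = some (soutL i))
    (h2 : chain τ (some (soutL i)) = some (sinL i)) :
    (∀ v, chain τ v = swapV (some (sinL i), some (soutL i)) v) ∨
    (∀ v, chain τ v = swapV (some (sinL i), some (soutL i))
        (swapV (some (Sum.inl (sw i).1), some (Sum.inl (sw i).2)) v)) := by
  unfold blockL at hτ
  rcases List.sublist_cons_iff.1 hτ with g1 | ⟨t1, rfl, g1⟩ <;>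
  rcases List.sublist_cons_iff.1 g1 with g2 | ⟨t2, rfl, g2⟩ <;>
  rcases List.sublist_cons_iff.1 g2 with g3 | ⟨t3, rfl, g3⟩ <;>
  rcases List.sublist_cons_iff.1 g3 with g4 | ⟨t4, rfl, g4⟩ <;>
  rcases List.sublist_cons_iff.1 g4 with g5 | ⟨t5, rfl, g5⟩ <;>
  rcases List.sublist_cons_iff.1 g5 with g6 | ⟨t6, rfl, g6⟩ <;>
  rw [List.sublist_nil] at g6 <;> subst g6 <;>
  first
    | exact Or.inl (chain_short i)
    | exact Or.inl (chain_med i _)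
    | exact Or.inr (chain_full i _ _ hab)
    | (exfalso
       simp [chain, sinL, soutL, swV_fst, swV_snd, swV_other, hab, Ne.symm hab] at h1 h2)

lemma sin_notMem (sw : Fin n → Fin m × Fin m) {ks : List (Fin n)} {i : Fin n}
    (hi : i ∉ ks) : (sinL i : L m n) ∉ (ks.map (blockL sw)).flatten := by
  intro h
  obtain ⟨l, hl, hx⟩ := List.mem_flatten.1 h
  obtain ⟨j, hj, rfl⟩ := List.mem_map.1 hl
  have : i = j := by simpa [blockL, sinL, soutL] using hx
  exact hi (this ▸ hj)

lemma sout_notMem (sw : Fin n → Fin m × Fin m) {ks : List (Fin n)} {i : Fin n}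
    (hi : i ∉ ks) : (soutL i : L m n) ∉ (ks.map (blockL sw)).flatten := by
  intro h
  obtain ⟨l, hl, hx⟩ := List.mem_flatten.1 h
  obtain ⟨j, hj, rfl⟩ := List.mem_map.1 hl
  have : i = j := by simpa [blockL, sinL, soutL] using hx
  exact hi (this ▸ hj)

lemma inl_fix_sin (e : Fin m × Fin m) (j : Fin n) :
    swapV (some (Sum.inl e.1), some (Sum.inl e.2)) (some (sinL j) : Option (L m n)) =
      some (sinL j) := swV_other (by simp [sinL]) (by simp [sinL])

lemma inl_fix_sout (e : Fin m × Fin m) (j : Fin n) :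
    swapV (some (Sum.inl e.1), some (Sum.inl e.2)) (some (soutL j) : Option (L m n)) =
      some (soutL j) := swV_other (by simp [soutL]) (by simp [soutL])

lemma inl_fix_none (e : Fin m × Fin m) :
    swapV (some (Sum.inl e.1), some (Sum.inl e.2)) (none : Option (L m n)) = none :=
  swV_other (by simp) (by simp)

lemma s_fix_none (i : Fin n) :
    swapV (some (sinL i), some (soutL i)) (none : Option (L m n)) = none :=
  swV_other (by simp) (by simp)

lemma s_fix_inl (i : Fin n) (t : Fin m) :
    swapV (some (sinL i), some (soutL i)) (some (Sum.inl t) : Option (L m n)) =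
      some (Sum.inl t) := swV_other (by simp [sinL]) (by simp [soutL])

lemma s_fix_sin {i j : Fin n} (h : j ≠ i) :
    swapV (some (sinL i), some (soutL i)) (some (sinL j) : Option (L m n)) =
      some (sinL j) := swV_other (by simp [sinL, h]) (by simp [sinL, soutL])

lemma s_fix_sout {i j : Fin n} (h : j ≠ i) :
    swapV (some (sinL i), some (soutL i)) (some (soutL j) : Option (L m n)) =
      some (soutL j) := swV_other (by simp [sinL, soutL]) (by simp [soutL, h])

lemma s_swap_sin (i : Fin n) :
    swapV (some (sinL i), some (soutL i)) (some (sinL i) : Option (L m n)) =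
      some (soutL i) := swV_fst _ _

lemma s_swap_sout (i : Fin n) :
    swapV (some (sinL i), some (soutL i)) (some (soutL i) : Option (L m n)) =
      some (sinL i) := swV_snd (by simp [sinL, soutL])

lemma back (sw : Fin n → Fin m × Fin m) (hne : ∀ i, (sw i).1 ≠ (sw i).2) :
    ∀ ks : List (Fin n), ks.Nodup → ∀ τ : List (L m n),
      τ.Sublist ((ks.map (blockL sw)).flatten) →
      (∀ i ∈ ks, chain τ (some (sinL i)) = some (soutL i) ∧
        chain τ (some (soutL i)) = some (sinL i)) →
      ∃ js : List (Fin n), js.Sublist ks ∧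
        ∀ t : Fin m, chain τ (some (Sum.inl t)) = some (Sum.inl (chainP (js.map sw) t)) := by
  intro ks
  induction ks with
  | nil =>
    intro _ τ hτ _
    rw [List.map_nil, List.flatten_nil, List.sublist_nil] at hτ
    subst hτ
    exact ⟨[], List.Sublist.refl _, fun t => rfl⟩
  | cons i ks ih =>
    intro hnd τ hτ hcond
    rw [List.map_cons, List.flatten_cons] at hτ
    obtain ⟨τ₁, τ₂, rfl, hτ₁, hτ₂⟩ := List.sublist_append_iff.1 hτ
    have hi : i ∉ ks := (List.nodup_cons.1 hnd).1
    have hnd' : ks.Nodup := (List.nodup_cons.1 hnd).2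
    have hii := hcond i ((List.mem_cons_self : i ∈ i :: ks))
    have hsoutnot : (soutL i : L m n) ∉ τ₂ := fun hm => sout_notMem sw hi (hτ₂.subset hm)
    have hsinnot : (sinL i : L m n) ∉ τ₂ := fun hm => sin_notMem sw hi (hτ₂.subset hm)
    have e1 : chain τ₁ (some (sinL i)) = some (soutL i) := by
      apply chain_notMem_rev τ₂ _ hsoutnot
      rw [← chain_append]; exact hii.1
    have e2 : chain τ₁ (some (soutL i)) = some (sinL i) := by
      apply chain_notMem_rev τ₂ _ hsinnot
      rw [← chain_append]; exact hii.2
    have hblock := block_back sw i (hne i) τ₁ hτ₁ e1 e2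
    have hfix : ∀ j ∈ ks, chain τ₁ (some (sinL j)) = some (sinL j) ∧
        chain τ₁ (some (soutL j)) = some (soutL j) := by
      intro j hj
      have hji : j ≠ i := fun e => hi (e ▸ hj)
      rcases hblock with hb | hb
      · exact ⟨by rw [hb, s_fix_sin hji], by rw [hb, s_fix_sout hji]⟩
      · exact ⟨by rw [hb, inl_fix_sin, s_fix_sin hji],
          by rw [hb, inl_fix_sout, s_fix_sout hji]⟩
    have hcond' : ∀ j ∈ ks, chain τ₂ (some (sinL j)) = some (soutL j) ∧
        chain τ₂ (some (soutL j)) = some (sinL j) := by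
      intro j hj
      have h := hcond j (List.mem_cons_of_mem _ hj)
      rw [chain_append, (hfix j hj).1] at h
      rw [chain_append, (hfix j hj).2] at h
      exact h
    obtain ⟨js, hjs, hch⟩ := ih hnd' τ₂ hτ₂ hcond'
    rcases hblock with hb | hb
    · refine ⟨js, hjs.cons i, fun t => ?_⟩
      rw [chain_append, hb, s_fix_inl, hch]
    · refine ⟨i :: js, hjs.cons₂ i, fun t => ?_⟩
      rw [chain_append, hb, swapV_inl, s_fix_inl, hch]
      rfl

lemma fwd (sw : Fin n → Fin m × Fin m) (hne : ∀ i, (sw i).1 ≠ (sw i).2) :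
    ∀ ks : List (Fin n), ks.Nodup → ∀ js : List (Fin n), js.Sublist ks →
      ∃ τ : List (L m n), τ.Sublist ((ks.map (blockL sw)).flatten) ∧
        (∀ t : Fin m, chain τ (some (Sum.inl t)) = some (Sum.inl (chainP (js.map sw) t))) ∧
        chain τ none = none ∧
        (∀ i ∈ ks, chain τ (some (sinL i)) = some (soutL i) ∧
          chain τ (some (soutL i)) = some (sinL i)) ∧
        (∀ i : Fin n, i ∉ ks → chain τ (some (sinL i)) = some (sinL i) ∧
          chain τ (some (soutL i)) = some (soutL i)) := by
  intro ks
  induction ks with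
  | nil =>
    intro _ js hjs
    rw [List.sublist_nil] at hjs
    subst hjs
    exact ⟨[], by simp, fun t => rfl, rfl, by simp, fun i _ => ⟨rfl, rfl⟩⟩
  | cons i ks ih =>
    intro hnd js hjs
    have hi : i ∉ ks := (List.nodup_cons.1 hnd).1
    have hnd' : ks.Nodup := (List.nodup_cons.1 hnd).2
    rw [List.map_cons, List.flatten_cons]
    rcases List.sublist_cons_iff.1 hjs with hjs' | ⟨js', rfl, hjs'⟩
    · -- not using swap i : short block
      obtain ⟨τ₂, hτ₂, hml, hnone, hks, hnotks⟩ := ih hnd' js hjs'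
      refine ⟨[sinL i, soutL i, sinL i] ++ τ₂, ?_, ?_, ?_, ?_, ?_⟩
      · refine List.Sublist.append ?_ hτ₂
        unfold blockL
        exact List.Sublist.cons₂ _ (List.sublist_cons_of_sublist _
          (List.sublist_cons_of_sublist _ (List.sublist_cons_of_sublist _
            (List.Sublist.cons₂ _ (List.Sublist.cons₂ _ (List.nil_sublist _))))))
      · intro t
        rw [chain_append, chain_short, s_fix_inl, hml]
      · rw [chain_append, chain_short, s_fix_none, hnone]
      · intro j hj
        rcases List.mem_cons.1 hj with rfl | hj
        · exact ⟨by rw [chain_append, chain_short, s_swap_sin, (hnotks j hi).2],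
            by rw [chain_append, chain_short, s_swap_sout, (hnotks j hi).1]⟩
        · have hji : j ≠ i := fun e => hi (e ▸ hj)
          exact ⟨by rw [chain_append, chain_short, s_fix_sin hji, (hks j hj).1],
            by rw [chain_append, chain_short, s_fix_sout hji, (hks j hj).2]⟩
      · intro j hj
        have hji : j ≠ i := fun e => hj (e ▸ (List.mem_cons_self : i ∈ i :: ks))
        have hjks : j ∉ ks := fun h => hj (List.mem_cons_of_mem _ h)
        exact ⟨by rw [chain_append, chain_short, s_fix_sin hji, (hnotks j hjks).1],
          by rw [chain_append, chain_short, s_fix_sout hji, (hnotks j hjks).2]⟩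
    · -- using swap i : full block
      obtain ⟨τ₂, hτ₂, hml, hnone, hks, hnotks⟩ := ih hnd' js' hjs'
      have hcf : ∀ v, chain (blockL sw i) v = swapV (some (sinL i), some (soutL i))
          (swapV (some (Sum.inl (sw i).1), some (Sum.inl (sw i).2)) v) :=
        chain_full i _ _ (hne i)
      refine ⟨blockL sw i ++ τ₂, List.Sublist.append (List.Sublist.refl _) hτ₂,
        ?_, ?_, ?_, ?_⟩
      · intro t
        rw [chain_append, hcf, swapV_inl, s_fix_inl, hml]
        rfl
      · rw [chain_append, hcf, inl_fix_none, s_fix_none, hnone]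
      · intro j hj
        rcases List.mem_cons.1 hj with rfl | hj
        · exact ⟨by rw [chain_append, hcf, inl_fix_sin, s_swap_sin, (hnotks j hi).2],
            by rw [chain_append, hcf, inl_fix_sout, s_swap_sout, (hnotks j hi).1]⟩
        · have hji : j ≠ i := fun e => hi (e ▸ hj)
          exact ⟨by rw [chain_append, hcf, inl_fix_sin, s_fix_sin hji, (hks j hj).1],
            by rw [chain_append, hcf, inl_fix_sout, s_fix_sout hji, (hks j hj).2]⟩
      · intro j hj
        have hji : j ≠ i := fun e => hj (e ▸ (List.mem_cons_self : i ∈ i :: ks))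
        have hjks : j ∉ ks := fun h => hj (List.mem_cons_of_mem _ h)
        exact ⟨by rw [chain_append, hcf, inl_fix_sin, s_fix_sin hji, (hnotks j hjks).1],
          by rw [chain_append, hcf, inl_fix_sout, s_fix_sout hji, (hnotks j hjks).2]⟩

lemma starSeq_eq (sw : Fin n → Fin m × Fin m) :
    starSeq sw = (((List.finRange n).map (blockL sw)).flatten : List (L m n)) := by
  unfold starSeq blockL sinL soutL
  rw [List.ofFn_eq_map]

end Blocks

theorem sts_iff_starSTS {m n : ℕ} (G : SimpleGraph (Fin m)) (π : Equiv.Perm (Fin m))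
    (sw : Fin n → Fin m × Fin m) (hsw : ∀ i, G.Adj (sw i).1 (sw i).2) :
    (∃ σ' : List (Fin m × Fin m), σ'.Sublist (List.ofFn sw) ∧
        applySwaps σ' (id : Fin m → Fin m) = ⇑π) ↔
      StarSTSYes (starTarget (n := n) π) (starSeq sw) := by
  have hne : ∀ i, (sw i).1 ≠ (sw i).2 := fun i => (hsw i).ne
  constructor
  · rintro ⟨σ', hsub, hπ⟩
    rw [List.ofFn_eq_map] at hsub
    obtain ⟨js, hjs, rfl⟩ := List.sublist_map_iff.1 hsub
    obtain ⟨τ, hτ, hml, hnone, hks, -⟩ :=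
      fwd sw hne (List.finRange n) (List.nodup_finRange n) js hjs
    refine ⟨τ, by rw [starSeq_eq]; exact hτ, ?_⟩
    funext v
    rw [starApply_eq_chain]
    have hπ' : ∀ t, chainP (js.map sw) t = π t := by
      intro t
      have := congrFun hπ t
      rwa [applySwaps_eq_chainP] at this
    rcases v with _ | (t | (j | j))
    · simpa [starTarget] using hnone
    · rw [show (id (some (Sum.inl t)) : Option (L m n)) = some (Sum.inl t) from rfl,
        hml t, hπ' t]
      simp [starTarget]
    · have := (hks j (List.mem_finRange j)).1
      rw [show (id (some (Sum.inr (Sum.inl j))) : Option (L m n)) = some (sinL j) from rfl,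
        this]
      simp [starTarget, soutL]
    · have := (hks j (List.mem_finRange j)).2
      rw [show (id (some (Sum.inr (Sum.inr j))) : Option (L m n)) = some (soutL j) from rfl,
        this]
      simp [starTarget, sinL]
  · rintro ⟨τ, hτ, heq⟩
    rw [starSeq_eq] at hτ
    have hval : ∀ v : Option (L m n), chain τ v = starTarget (n := n) π v := by
      intro v
      have := congrFun heq v
      rwa [starApply_eq_chain] at this
    have hcond : ∀ i ∈ List.finRange n, chain τ (some (sinL i)) = some (soutL i) ∧
        chain τ (some (soutL i)) = some (sinL i) := by
      intro i _
      constructor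
      · rw [hval]; simp [starTarget, sinL, soutL]
      · rw [hval]; simp [starTarget, sinL, soutL]
    obtain ⟨js, hjs, hch⟩ := back sw hne (List.finRange n) (List.nodup_finRange n) τ hτ hcond
    refine ⟨js.map sw, by rw [List.ofFn_eq_map]; exact hjs.map sw, ?_⟩
    funext t
    rw [applySwaps_eq_chainP]
    have h1 := hch t
    rw [hval] at h1
    have : some (Sum.inl (π t) : L m n) = some (Sum.inl (chainP (js.map sw) t)) := by
      rw [← h1]; simp [starTarget]
    simpa [eq_comm] using this

end Stmt1
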